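/- In the presented group P₄ = ⟨x, y | x⁴, y², (xy)⁴⟩, the elements t₁ = x² y⁻¹ and t₂ = x y⁻¹ x commute, the subgroup they generate is a normal subgroup of P₄, and this subgroup is isomorphic to ℤ × ℤ (free abelian of rank 2). -/

import Mathlib

/-- Relators of `P₄ = ⟨x, y | x⁴, y², (xy)⁴⟩`, the fundamental group of `S²(2,4,4)`. -/
def relsP4 : Set (FreeGroup (Fin 2)) :=
  {(FreeGroup.of 0) ^ 4, (FreeGroup.of 1) ^ 2, (FreeGroup.of 0 * FreeGroup.of 1) ^ 4}

/-- `P₄ = ⟨x, y | x⁴, y², (xy)⁴⟩`. -/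
abbrev P4 : Type := PresentedGroup relsP4

/-- The generator `x` of `P₄`. -/
def P4x : P4 := PresentedGroup.of 0

/-- The generator `y` of `P₄`. -/
def P4y : P4 := PresentedGroup.of 1

/-- The translation `t₁ = x² y⁻¹` of `P₄`. -/
def P4t1 : P4 := P4x * P4x * P4y⁻¹

/-- The translation `t₂ = x y⁻¹ x` of `P₄`. -/
def P4t2 : P4 := P4x * P4y⁻¹ * P4x


lemma P4.rel_mk {r : FreeGroup (Fin 2)} (h : r ∈ relsP4) : PresentedGroup.mk relsP4 r = 1 :=
  (QuotientGroup.eq_one_iff r).2 (Subgroup.subset_normalClosure h)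

lemma hx4 : P4x * P4x * P4x * P4x = 1 := by
  have := P4.rel_mk (r := (FreeGroup.of 0)^4) (by left; rfl)
  rw [map_pow] at this
  rw [show P4x * P4x * P4x * P4x = P4x ^ 4 by rw [pow_succ, pow_succ, pow_succ, pow_one]]
  exact this

lemma hy2 : P4y * P4y = 1 := by
  have := P4.rel_mk (r := (FreeGroup.of 1)^2) (by right; left; rfl)
  rw [map_pow] at this
  rw [show P4y * P4y = P4y ^ 2 by rw [pow_succ, pow_one]]
  exact this

lemma hxy4 : (P4x*P4y) * (P4x*P4y) * (P4x*P4y) * (P4x*P4y) = 1 := by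
  have := P4.rel_mk (r := (FreeGroup.of 0 * FreeGroup.of 1)^4) (by right; right; rfl)
  rw [map_pow, map_mul] at this
  rw [show (P4x*P4y)*(P4x*P4y)*(P4x*P4y)*(P4x*P4y) = (P4x*P4y) ^ 4 by
    rw [pow_succ, pow_succ, pow_succ, pow_one]]
  exact this

lemma hyinv : P4y⁻¹ = P4y := inv_eq_of_mul_eq_one_right hy2

lemma hxinv : P4x⁻¹ = P4x * P4x * P4x := by
  have h : P4x * (P4x * P4x * P4x) = 1 := by rw [← mul_assoc, ← mul_assoc]; exact hx4
  exact inv_eq_of_mul_eq_one_right h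

lemma two_two {G : Type*} [Group G] {c : G} (h : c*c*c*c = 1) : (c*c)⁻¹ = c*c := by
  have h1 : (c*c)*(c*c) = 1 := by rw [show (c*c)*(c*c) = c*c*c*c by group]; exact h
  exact inv_eq_of_mul_eq_one_left h1

lemma h3 : (P4x*P4y)*(P4x*P4y) = P4y*(P4x*P4x*P4x)*(P4y*(P4x*P4x*P4x)) := by
  conv_lhs => rw [← two_two hxy4]
  rw [mul_inv_rev, mul_inv_rev, hxinv, hyinv]

lemma hyx4 : (P4y*P4x) * (P4y*P4x) * (P4y*P4x) * (P4y*P4x) = 1 := by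
  have h : (P4y*P4x)*(P4y*P4x)*(P4y*P4x)*(P4y*P4x)
      = P4y * ((P4x*P4y)*(P4x*P4y)*(P4x*P4y)*(P4x*P4y)) * P4y⁻¹ := by group
  rw [h, hxy4, mul_one, mul_inv_cancel]

lemma h3' : (P4y*P4x)*(P4y*P4x) = (P4x*P4x*P4x)*P4y*((P4x*P4x*P4x)*P4y) := by
  conv_lhs => rw [← two_two hyx4]
  rw [mul_inv_rev, mul_inv_rev, hxinv, hyinv]

lemma key1 : P4x*P4y*P4x*P4y*P4x = P4y*(P4x*P4x*P4x)*P4y := by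
  calc P4x*P4y*P4x*P4y*P4x = (P4x*P4y)*(P4x*P4y)*P4x := by group
    _ = P4y*(P4x*P4x*P4x)*(P4y*(P4x*P4x*P4x))*P4x := by rw [h3]
    _ = P4y*(P4x*P4x*P4x)*P4y*(P4x*P4x*P4x*P4x) := by group
    _ = P4y*(P4x*P4x*P4x)*P4y := by rw [hx4, mul_one]

lemma key2 : P4y*P4x*P4y*P4x*P4y = (P4x*P4x*P4x)*P4y*(P4x*P4x*P4x) := by
  calc P4y*P4x*P4y*P4x*P4y = (P4y*P4x)*(P4y*P4x)*P4y := by group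
    _ = (P4x*P4x*P4x)*P4y*((P4x*P4x*P4x)*P4y)*P4y := by rw [h3']
    _ = (P4x*P4x*P4x)*P4y*(P4x*P4x*P4x)*(P4y*P4y) := by group
    _ = (P4x*P4x*P4x)*P4y*(P4x*P4x*P4x) := by rw [hy2, mul_one]

lemma P4comm : Commute P4t1 P4t2 := by
  unfold Commute SemiconjBy P4t1 P4t2
  rw [hyinv]
  calc (P4x*P4x*P4y)*(P4x*P4y*P4x) = P4x*(P4x*P4y*P4x*P4y*P4x) := by group
    _ = P4x*(P4y*(P4x*P4x*P4x)*P4y) := by rw [key1]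
    _ = (P4x*P4y*P4x)*(P4x*P4x*P4y) := by group

lemma cxt1 : P4x * P4t1 * P4x⁻¹ = P4t2⁻¹ := by
  unfold P4t1 P4t2
  rw [hyinv, hxinv, mul_inv_rev, mul_inv_rev, hyinv, hxinv]
  group

lemma cxt2 : P4x * P4t2 * P4x⁻¹ = P4t1 := by
  unfold P4t1 P4t2; group

lemma cyt1 : P4y * P4t1 * P4y⁻¹ = P4t1⁻¹ := by
  unfold P4t1
  rw [hyinv, mul_inv_rev, mul_inv_rev, hyinv, hxinv]
  calc P4y*(P4x*P4x*P4y)*P4y = P4y*(P4x*P4x)*(P4y*P4y) := by group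
    _ = P4y*(P4x*P4x) := by rw [hy2, mul_one]
    _ = P4y*(P4x*P4x)*(P4x*P4x*P4x*P4x) := by rw [hx4, mul_one]
    _ = P4y*(P4x*P4x*P4x)*(P4x*P4x*P4x) := by group

lemma cyt2 : P4y * P4t2 * P4y⁻¹ = P4t2⁻¹ := by
  unfold P4t2
  rw [hyinv, mul_inv_rev, mul_inv_rev, hyinv, hxinv]
  calc P4y*(P4x*P4y*P4x)*P4y = P4y*P4x*P4y*P4x*P4y := by group
    _ = (P4x*P4x*P4x)*P4y*(P4x*P4x*P4x) := key2
    _ = (P4x*P4x*P4x)*(P4y*(P4x*P4x*P4x)) := by group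

/-! ### The model: P4 acts on ℤ × ℤ -/

def rotP : Equiv.Perm (ℤ × ℤ) where
  toFun p := (-p.2, p.1)
  invFun p := (p.2, -p.1)
  left_inv p := by simp
  right_inv p := by simp

def halfP : Equiv.Perm (ℤ × ℤ) :=
  Function.Involutive.toPerm (fun p => (1 - p.1, 1 - p.2)) (fun p => by simp)

lemma rotP_apply (p : ℤ × ℤ) : rotP p = (-p.2, p.1) := rfl
lemma halfP_apply (p : ℤ × ℤ) : halfP p = (1 - p.1, 1 - p.2) := rfl

lemma halfP_inv : halfP⁻¹ = halfP := by
  have : halfP * halfP = 1 := by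
    refine Equiv.ext fun p => ?_
    simp [Equiv.Perm.mul_apply, halfP_apply, Prod.ext_iff]
  exact inv_eq_of_mul_eq_one_right this

def genMap : Fin 2 → Equiv.Perm (ℤ × ℤ) := ![rotP, halfP]

lemma relsCheck : ∀ r ∈ relsP4, FreeGroup.lift genMap r = 1 := by
  rintro r (rfl | rfl | rfl)
  · rw [map_pow, FreeGroup.lift_apply_of]
    refine Equiv.ext fun p => ?_
    simp [genMap, pow_succ, Equiv.Perm.mul_apply, rotP_apply, Prod.ext_iff]
  · rw [map_pow, FreeGroup.lift_apply_of]
    refine Equiv.ext fun p => ?_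
    simp [genMap, pow_succ, Equiv.Perm.mul_apply, halfP_apply, Prod.ext_iff]
  · rw [map_pow, map_mul, FreeGroup.lift_apply_of, FreeGroup.lift_apply_of]
    refine Equiv.ext fun p => ?_
    simp [genMap, pow_succ, Equiv.Perm.mul_apply, rotP_apply, halfP_apply, Prod.ext_iff]

def fP : P4 →* Equiv.Perm (ℤ × ℤ) := PresentedGroup.toGroup relsCheck

lemma fP_x : fP P4x = rotP := by
  simp [fP, P4x, PresentedGroup.toGroup.of, genMap]

lemma fP_y : fP P4y = halfP := by
  simp [fP, P4y, PresentedGroup.toGroup.of, genMap]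

def transHom : Multiplicative (ℤ × ℤ) →* Equiv.Perm (ℤ × ℤ) where
  toFun v := Equiv.addLeft v.toAdd
  map_one' := Equiv.ext fun p => by simp
  map_mul' u v := Equiv.ext fun p => by
    simp [Equiv.Perm.mul_apply, add_assoc]

lemma transHom_apply (v : Multiplicative (ℤ × ℤ)) (p : ℤ × ℤ) :
    transHom v p = v.toAdd + p := rfl

lemma fP_t1 : fP P4t1 = transHom (Multiplicative.ofAdd (-1, -1)) := by
  rw [show P4t1 = P4x * P4x * P4y⁻¹ from rfl, map_mul, map_mul, map_inv, fP_x, fP_y, halfP_inv]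
  refine Equiv.ext fun p => ?_
  simp [Equiv.Perm.mul_apply, rotP_apply, halfP_apply, transHom_apply, Prod.ext_iff]
  omega

lemma fP_t2 : fP P4t2 = transHom (Multiplicative.ofAdd (-1, 1)) := by
  rw [show P4t2 = P4x * P4y⁻¹ * P4x from rfl, map_mul, map_mul, map_inv, fP_x, fP_y, halfP_inv]
  refine Equiv.ext fun p => ?_
  simp [Equiv.Perm.mul_apply, rotP_apply, halfP_apply, transHom_apply, Prod.ext_iff]
  omega

/-! ### The translation subgroup -/

abbrev Hsub : Subgroup P4 := Subgroup.closure ({P4t1, P4t2} : Set P4)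

lemma t1_mem : P4t1 ∈ Hsub := Subgroup.subset_closure (Set.mem_insert _ _)
lemma t2_mem : P4t2 ∈ Hsub := Subgroup.subset_closure (Set.mem_insert_of_mem _ rfl)

def gHom : Multiplicative (ℤ × ℤ) →* P4 where
  toFun z := P4t1 ^ z.toAdd.1 * P4t2 ^ z.toAdd.2
  map_one' := by simp
  map_mul' u v := by
    have h := P4comm
    show P4t1 ^ (u * v).toAdd.1 * P4t2 ^ (u * v).toAdd.2 = _
    rw [show (u * v).toAdd = u.toAdd + v.toAdd from rfl]
    simp only [Prod.fst_add, Prod.snd_add, zpow_add]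
    exact (h.zpow_zpow v.toAdd.1 u.toAdd.2).mul_mul_mul_comm _ _

lemma gHom_mem (z : Multiplicative (ℤ × ℤ)) : gHom z ∈ Hsub :=
  mul_mem (zpow_mem t1_mem _) (zpow_mem t2_mem _)

lemma gHom_inj : Function.Injective gHom := by
  refine (injective_iff_map_eq_one gHom).2 fun z hz => ?_
  have h1 : fP (gHom z) = 1 := by rw [hz, map_one]
  rw [show gHom z = P4t1 ^ z.toAdd.1 * P4t2 ^ z.toAdd.2 from rfl, map_mul, map_zpow, map_zpow,
    fP_t1, fP_t2, ← map_zpow transHom, ← map_zpow transHom, ← map_mul] at h1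
  have h2 := congrArg (fun σ : Equiv.Perm (ℤ × ℤ) => σ (0, 0)) h1
  simp only [transHom_apply, Equiv.Perm.coe_one, id_eq] at h2
  set a := z.toAdd.1 with ha
  set b := z.toAdd.2 with hb
  simp only [toAdd_mul, toAdd_zpow, toAdd_ofAdd, Prod.smul_mk, smul_eq_mul, Prod.mk_add_mk,
    add_zero, Prod.mk.injEq] at h2
  have hA : a = 0 := by omega
  have hB : b = 0 := by omega
  have hz0 : z.toAdd = 0 := by
    have : z.toAdd = (a, b) := rfl
    rw [this, hA, hB]; rfl
  have : z.toAdd = Multiplicative.toAdd (1 : Multiplicative (ℤ × ℤ)) := hz0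
  exact Multiplicative.toAdd.injective this

lemma closure_le_range : Hsub ≤ gHom.range := by
  rw [Subgroup.closure_le]
  rintro t (rfl | rfl)
  · show P4t1 ∈ gHom.range
    exact ⟨Multiplicative.ofAdd (1, 0), by
      show P4t1 ^ (1 : ℤ) * P4t2 ^ (0 : ℤ) = P4t1
      simp⟩
  · show P4t2 ∈ gHom.range
    exact ⟨Multiplicative.ofAdd (0, 1), by
      show P4t1 ^ (0 : ℤ) * P4t2 ^ (1 : ℤ) = P4t2
      simp⟩

/-! ### Normality -/

lemma conj_mem_H {g : P4} (h1 : g * P4t1 * g⁻¹ ∈ Hsub) (h2 : g * P4t2 * g⁻¹ ∈ Hsub) :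
    ∀ n ∈ Hsub, g * n * g⁻¹ ∈ Hsub := by
  intro n hn
  induction hn using Subgroup.closure_induction with
  | mem a ha => rcases ha with rfl | rfl; exacts [h1, h2]
  | one => simpa using one_mem Hsub
  | mul a b _ _ pa pb =>
      have e : g * (a * b) * g⁻¹ = (g * a * g⁻¹) * (g * b * g⁻¹) := by group
      rw [e]; exact mul_mem pa pb
  | inv a _ pa =>
      have e : g * a⁻¹ * g⁻¹ = (g * a * g⁻¹)⁻¹ := by group
      rw [e]; exact inv_mem pa

lemma x_mem_normalizer : P4x ∈ Subgroup.normalizer (Hsub : Set P4) := by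
  rw [Subgroup.mem_normalizer_iff]
  intro h
  constructor
  · intro hh
    exact conj_mem_H (by rw [cxt1]; exact inv_mem t2_mem) (by rw [cxt2]; exact t1_mem) h hh
  · intro hh
    have e2 : P4x⁻¹ * P4t1 * P4x⁻¹⁻¹ = P4t2 := by rw [inv_inv, ← cxt2]; group
    have e3 : P4x⁻¹ * P4t2 * P4x⁻¹⁻¹ = P4t1⁻¹ := by
      have hcon := congrArg (fun w => w⁻¹) cxt1
      simp only [inv_inv] at hcon
      rw [inv_inv, ← hcon]; group
    have hmem := conj_mem_H (g := P4x⁻¹) (by rw [e2]; exact t2_mem)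
      (by rw [e3]; exact inv_mem t1_mem) _ hh
    have e : P4x⁻¹ * (P4x * h * P4x⁻¹) * P4x⁻¹⁻¹ = h := by group
    rwa [e] at hmem

lemma y_mem_normalizer : P4y ∈ Subgroup.normalizer (Hsub : Set P4) := by
  rw [Subgroup.mem_normalizer_iff]
  intro h
  have hyc1 : P4y * P4t1 * P4y⁻¹ ∈ Hsub := by rw [cyt1]; exact inv_mem t1_mem
  have hyc2 : P4y * P4t2 * P4y⁻¹ ∈ Hsub := by rw [cyt2]; exact inv_mem t2_mem
  constructor
  · intro hh
    exact conj_mem_H hyc1 hyc2 h hh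
  · intro hh
    have hmem := conj_mem_H (g := P4y) hyc1 hyc2 _ hh
    have e : P4y * (P4y * h * P4y⁻¹) * P4y⁻¹ = h := by
      calc P4y * (P4y * h * P4y⁻¹) * P4y⁻¹ = (P4y * P4y) * h * (P4y * P4y)⁻¹ := by group
        _ = h := by rw [hy2]; group
    rwa [e] at hmem

lemma Hnormal : Hsub.Normal := by
  rw [← Subgroup.normalizer_eq_top_iff, eq_top_iff]
  intro g _
  refine PresentedGroup.generated_by relsP4 _ ?_ g
  intro j
  fin_cases j
  · exact x_mem_normalizer
  · exact y_mem_normalizer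

/-- In `P₄`, the translations `t₁ = x² y⁻¹` and `t₂ = x y⁻¹ x` commute, generate a
normal subgroup, and this subgroup is free abelian of rank 2. -/
theorem stmt14 :
    Commute P4t1 P4t2 ∧
    (Subgroup.closure ({P4t1, P4t2} : Set P4)).Normal ∧
    Nonempty ((Subgroup.closure ({P4t1, P4t2} : Set P4)) ≃* Multiplicative (ℤ × ℤ)) := by
  refine ⟨P4comm, Hnormal, ?_⟩
  let e : Multiplicative (ℤ × ℤ) →* Hsub := gHom.codRestrict _ gHom_mem
  have hbij : Function.Bijective e := by
    constructor
    · intro u v huv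
      exact gHom_inj (congrArg Subtype.val huv)
    · rintro ⟨h, hh⟩
      obtain ⟨z, hz⟩ := closure_le_range hh
      exact ⟨z, Subtype.ext hz⟩
  exact ⟨(MulEquiv.ofBijective e hbij).symm⟩
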